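/- arXiv:1305.4243 — 9 statements merged into one kernel-verified Lean document; each statement's English description precedes it below -/
import Mathlib

section
/- If every eigenvalue λ of (Bᵀ ⊗ A)·P satisfies λ ≠ 1, then for every n×n matrix C the equation X = A Xᵀ B + C has a unique solution X. -/
open Matrix
open scoped Kronecker

/-- `vec` stacks the columns of a matrix into one (column) vector. -/
def vec {n : ℕ} (X : Matrix (Fin n) (Fin n) ℝ) : Fin n × Fin n → ℝ :=
  fun p => X p.2 p.1

lemma vec_injective {n : ℕ} : Function.Injective (vec (n := n)) := by
  intro X Y hXY
  ext i j
  exact congrFun hXY (j, i)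

lemma vec_kron {n : ℕ} (A B Y : Matrix (Fin n) (Fin n) ℝ) :
    _root_.vec (A * Y * B) = (Bᵀ ⊗ₖ A).mulVec (_root_.vec Y) := by
  ext ⟨j, i⟩
  simp only [_root_.vec, mulVec, dotProduct, kroneckerMap_apply, transpose_apply,
    Matrix.mul_apply, Fintype.sum_prod_type, Finset.sum_mul]
  congr 1; ext l; congr 1; ext k; ring

/-- If every eigenvalue `μ` of `(Bᵀ ⊗ A) P` satisfies `μ ≠ 1`, where `P` is the
commutation matrix, then for every `n × n` matrix `C` the ⊤-Stein equation
`X = A Xᵀ B + C` has a unique solution. -/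
theorem tstein_unique_of_spectrum {n : ℕ}
    (P : Matrix (Fin n × Fin n) (Fin n × Fin n) ℝ)
    (hP : ∀ X : Matrix (Fin n) (Fin n) ℝ, P.mulVec (_root_.vec X) = _root_.vec Xᵀ)
    (A B : Matrix (Fin n) (Fin n) ℝ)
    (h : ∀ μ ∈ spectrum ℝ ((Bᵀ ⊗ₖ A) * P), μ ≠ 1) :
    ∀ C : Matrix (Fin n) (Fin n) ℝ,
      ∃! X : Matrix (Fin n) (Fin n) ℝ, X = A * Xᵀ * B + C := by
  intro C
  set M := (Bᵀ ⊗ₖ A) * P with hM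
  have hUnit : IsUnit (1 - M) := by
    by_contra h'
    exact h 1 (spectrum.mem_iff.mpr (by simpa using h')) rfl
  have hdet : IsUnit (1 - M).det := (Matrix.isUnit_iff_isUnit_det _).mp hUnit
  have hinv1 : (1 - M) * (1 - M)⁻¹ = 1 := Matrix.mul_nonsing_inv _ hdet
  have hinv2 : (1 - M)⁻¹ * (1 - M) = 1 := Matrix.nonsing_inv_mul _ hdet
  -- key equivalence
  have key : ∀ X : Matrix (Fin n) (Fin n) ℝ,
      (X = A * Xᵀ * B + C) ↔ (1 - M).mulVec (_root_.vec X) = _root_.vec C := by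
    intro X
    have hvecadd : _root_.vec (A * Xᵀ * B + C) = _root_.vec (A * Xᵀ * B) + _root_.vec C := rfl
    have hv : _root_.vec (A * Xᵀ * B) = M.mulVec (_root_.vec X) := by
      rw [vec_kron, ← hP X, ← Matrix.mulVec_mulVec]
    constructor
    · intro hX
      have hthis : _root_.vec X = M.mulVec (_root_.vec X) + _root_.vec C := by
        conv_lhs => rw [hX]
        rw [hvecadd, hv]
      rw [Matrix.sub_mulVec, Matrix.one_mulVec, sub_eq_iff_eq_add']
      exact hthis
    · intro hX
      apply vec_injective
      rw [Matrix.sub_mulVec, Matrix.one_mulVec] at hX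
      rw [hvecadd, hv, ← sub_eq_iff_eq_add']
      exact hX
  -- the solution
  set v := (1 - M)⁻¹.mulVec (_root_.vec C) with hv
  set X0 : Matrix (Fin n) (Fin n) ℝ := Matrix.of fun i j => v (j, i) with hX0
  have hvecX0 : _root_.vec X0 = v := by
    ext ⟨j, i⟩; rfl
  refine ⟨X0, (key X0).mpr ?_, ?_⟩
  · rw [hvecX0, hv, Matrix.mulVec_mulVec, hinv1, Matrix.one_mulVec]
  · intro Y hY
    rw [key] at hY
    apply vec_injective
    rw [hvecX0, hv, ← hY, Matrix.mulVec_mulVec, hinv2, Matrix.one_mulVec]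
end

section
/- If λ and μ are eigenvalues of AᵀB with λμ = 1 and λ ≠ −1 (or λ = μ = −1 with −1 not a simple eigenvalue), then the operator X ↦ X − A Xᵀ B on ℂ^{n×n} is not injective. -/
open Matrix Polynomial Module


section TSteinAux

variable {n : ℕ}

private lemma tstein_vmv (A B : Matrix (Fin n) (Fin n) ℂ) (x y : Fin n → ℂ) :
    A * (vecMulVec x y)ᵀ * B = vecMulVec (A *ᵥ y) (Bᵀ *ᵥ x) := by
  ext i j
  simp only [mul_apply, vecMulVec_apply, transpose_apply, mulVec, dotProduct,
    Finset.sum_mul, Finset.mul_sum]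
  refine Finset.sum_congr rfl fun k _ => Finset.sum_congr rfl fun l _ => by ring

private lemma tstein_eig {M : Matrix (Fin n) (Fin n) ℂ} {c : ℂ}
    (h : c ∈ spectrum ℂ M) : ∃ v, v ≠ 0 ∧ M *ᵥ v = c • v := by
  rw [spectrum.mem_iff, Matrix.isUnit_iff_isUnit_det] at h
  have hdet : ((algebraMap ℂ (Matrix (Fin n) (Fin n) ℂ) c) - M).det = 0 := by
    by_contra h'; exact h (isUnit_iff_ne_zero.mpr h')
  obtain ⟨v, hv0, hv⟩ := Matrix.exists_mulVec_eq_zero_iff.mpr hdet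
  refine ⟨v, hv0, ?_⟩
  have h1 : (algebraMap ℂ (Matrix (Fin n) (Fin n) ℂ) c) *ᵥ v - M *ᵥ v = 0 := by
    rw [← sub_mulVec]; exact hv
  have h2 : (algebraMap ℂ (Matrix (Fin n) (Fin n) ℂ) c) *ᵥ v = c • v := by
    rw [Algebra.algebraMap_eq_smul_one, smul_mulVec, one_mulVec]
  rw [h2] at h1
  exact (sub_eq_zero.mp h1).symm

private lemma tstein_spec_transpose {M : Matrix (Fin n) (Fin n) ℂ} {c : ℂ}
    (h : c ∈ spectrum ℂ M) : c ∈ spectrum ℂ Mᵀ := by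
  rw [spectrum.mem_iff, Matrix.isUnit_iff_isUnit_det] at h ⊢
  have e : ((algebraMap ℂ (Matrix (Fin n) (Fin n) ℂ)) c - Mᵀ) =
      ((algebraMap ℂ (Matrix (Fin n) (Fin n) ℂ)) c - M)ᵀ := by
    simp [transpose_sub, Algebra.algebraMap_eq_smul_one]
  rw [e, det_transpose]
  exact h

private lemma tstein_charpoly_transpose (M : Matrix (Fin n) (Fin n) ℂ) :
    Mᵀ.charpoly = M.charpoly := by
  unfold Matrix.charpoly
  rw [← Matrix.det_transpose (charmatrix M)]
  congr 1
  ext i j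
  by_cases hij : i = j
  · subst hij; simp [charmatrix_apply]
  · simp [charmatrix_apply, Matrix.transpose_apply, Matrix.diagonal_apply,
      hij, Ne.symm hij]

private lemma tstein_charpoly_shift (M : Matrix (Fin n) (Fin n) ℂ) (t : ℂ) :
    (M.charpoly).comp (X + C t) = (M - t • 1).charpoly := by
  unfold Matrix.charpoly
  have e : (charmatrix M).det.comp (X + C t) =
      (eval₂RingHom C (X + C t)) (charmatrix M).det := rfl
  rw [e, RingHom.map_det]
  congr 1
  ext i j
  by_cases hij : i = j
  · subst hij
    simp [charmatrix_apply, Matrix.diagonal_apply, Matrix.one_apply, map_sub, Matrix.sub_apply,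
      Matrix.smul_apply]
    ring
  · simp [charmatrix_apply, Matrix.diagonal_apply, hij, Matrix.sub_apply, Matrix.smul_apply,
      Matrix.one_apply_ne hij]

private lemma tstein_key2 (M : Matrix (Fin n) (Fin n) ℂ)
    (h : 1 < M.charpoly.roots.count (-1)) :
    (∃ q₁ q₂ : Fin n → ℂ, (M *ᵥ q₁ = -q₁) ∧ (M *ᵥ q₂ = -q₂) ∧ LinearIndependent ℂ ![q₁, q₂]) ∨
    (∃ q₁ q₂ : Fin n → ℂ, q₁ ≠ 0 ∧ M *ᵥ q₁ = -q₁ ∧ M *ᵥ q₂ + q₂ = q₁) := by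
  rw [count_roots, rootMultiplicity_eq_natTrailingDegree, tstein_charpoly_shift] at h
  have hM1 : M - (-1 : ℂ) • 1 = M + 1 := by rw [neg_smul, one_smul, sub_neg_eq_add]
  rw [hM1] at h
  set φ : Module.End ℂ (Fin n → ℂ) := Matrix.toLin' (M + 1) with hφ
  have hφc : φ.charpoly = (M + 1).charpoly := by
    rw [hφ, ← LinearMap.charpoly_toMatrix (Matrix.toLin' (M + 1)) (Pi.basisFun ℂ (Fin n)),
      LinearMap.toMatrix_eq_toMatrix', LinearMap.toMatrix'_toLin']
  have hrank : 1 < finrank ℂ (φ.maxGenEigenspace 0) := by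
    rw [LinearMap.finrank_maxGenEigenspace_zero_eq, hφc]; exact h
  have hφapp : ∀ v, φ v = M *ᵥ v + v := by
    intro v; rw [hφ, Matrix.toLin'_apply, add_mulVec, one_mulVec]
  by_cases hker : 1 < finrank ℂ (LinearMap.ker φ)
  · left
    have h0 : 0 < finrank ℂ (LinearMap.ker φ) := by omega
    obtain ⟨x, hx⟩ : ∃ x : LinearMap.ker φ, x ≠ 0 := by
      have := Module.finrank_pos_iff (R := ℂ) (M := LinearMap.ker φ) |>.mp h0
      exact exists_ne 0
    obtain ⟨y, hxy⟩ := exists_linearIndependent_pair_of_one_lt_rank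
      (lt_rank_of_lt_finrank hker) hx
    refine ⟨x, y, ?_, ?_, ?_⟩
    · have := x.2; rw [LinearMap.mem_ker, hφapp] at this
      exact eq_neg_of_add_eq_zero_left this
    · have := y.2; rw [LinearMap.mem_ker, hφapp] at this
      exact eq_neg_of_add_eq_zero_left this
    · have hmap := hxy.map' (LinearMap.ker φ).subtype (Submodule.ker_subtype _)
      have he : ((LinearMap.ker φ).subtype ∘ ![x, y]) = ![(x : Fin n → ℂ), (y : Fin n → ℂ)] := by
        funext i; fin_cases i <;> rfl
      rwa [← he]
  · right
    push_neg at hker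
    obtain ⟨u, humem, hu⟩ : ∃ u, u ∈ φ.maxGenEigenspace 0 ∧ φ u ≠ 0 := by
      by_contra hcon
      push_neg at hcon
      have hle : φ.maxGenEigenspace 0 ≤ LinearMap.ker φ := fun v hv =>
        LinearMap.mem_ker.mpr (hcon v hv)
      have := Submodule.finrank_mono hle
      omega
    rw [Module.End.mem_maxGenEigenspace] at humem
    obtain ⟨k, hk⟩ := humem
    simp only [zero_smul, sub_zero] at hk
    have hP : ∃ m, (φ ^ m) u = 0 := ⟨k, hk⟩
    classical
    let m := Nat.find hP
    have hm0 : (φ ^ m) u = 0 := Nat.find_spec hP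
    have hm2 : 2 ≤ m := by
      by_contra hc
      push_neg at hc
      interval_cases m
      · rw [pow_zero, Module.End.one_apply] at hm0
        exact hu (by rw [hm0, map_zero])
      · rw [pow_one] at hm0
        exact hu hm0
    have hq1ne : (φ ^ (m - 1)) u ≠ 0 := Nat.find_min hP (by omega)
    refine ⟨(φ ^ (m - 1)) u, (φ ^ (m - 2)) u, hq1ne, ?_, ?_⟩
    · have h1 : φ ((φ ^ (m - 1)) u) = 0 := by
        rw [← Module.End.mul_apply, ← pow_succ']
        have h21 : m - 1 + 1 = m := by omega
        rw [h21]
        exact hm0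
      rw [hφapp] at h1
      exact eq_neg_of_add_eq_zero_left h1
    · have h1 : φ ((φ ^ (m - 2)) u) = (φ ^ (m - 1)) u := by
        rw [← Module.End.mul_apply, ← pow_succ']
        have h21 : m - 2 + 1 = m - 1 := by omega
        rw [h21]
      rw [hφapp] at h1
      exact h1

end TSteinAux



/-- If `λ` and `μ` are eigenvalues of `Aᵀ B` with `λ μ = 1`, and either `λ ≠ −1`,
or `λ = μ = −1` with `−1` not a simple eigenvalue (algebraic multiplicity `> 1`),
then the operator `X ↦ X − A Xᵀ B` on `ℂ^{n×n}` is not injective. -/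
theorem tstein_not_injective {n : ℕ} (A B : Matrix (Fin n) (Fin n) ℂ) (lam mu : ℂ)
    (hlam : lam ∈ spectrum ℂ (Aᵀ * B)) (hmu : mu ∈ spectrum ℂ (Aᵀ * B))
    (hprod : lam * mu = 1)
    (hcase : lam ≠ -1 ∨
      (lam = -1 ∧ mu = -1 ∧ 1 < (Aᵀ * B).charpoly.roots.count (-1))) :
    ¬ Function.Injective (fun X : Matrix (Fin n) (Fin n) ℂ => X - A * Xᵀ * B) := by
  intro hinj
  have key : ∀ X : Matrix (Fin n) (Fin n) ℂ, A * Xᵀ * B = X → X = 0 := by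
    intro X hX
    have h0 : (fun X : Matrix (Fin n) (Fin n) ℂ => X - A * Xᵀ * B) X =
        (fun X : Matrix (Fin n) (Fin n) ℂ => X - A * Xᵀ * B) 0 := by
      simp [hX]
    exact hinj h0
  rcases hcase with hne | ⟨hl, hm, hcount⟩
  · -- case lam ≠ -1
    have hlam0 : lam ≠ 0 := left_ne_zero_of_mul_eq_one hprod
    have hq' : mu ∈ spectrum ℂ (Bᵀ * A) := by
      have := tstein_spec_transpose hmu
      rwa [transpose_mul, transpose_transpose] at this
    have hp' : lam ∈ spectrum ℂ (A * Bᵀ) := by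
      have h1 : lam ∈ spectrum ℂ (B * Aᵀ) :=
        (spectrum.unit_mem_mul_comm (a := Aᵀ) (b := B)
          (r := Units.mk0 lam hlam0)).mp hlam
      have := tstein_spec_transpose h1
      rwa [transpose_mul, transpose_transpose] at this
    obtain ⟨p, hp0, hpe⟩ := tstein_eig hp'
    obtain ⟨q, hq0, hqe⟩ := tstein_eig hq'
    have e1 : A *ᵥ (Bᵀ *ᵥ p) = lam • p := by rw [mulVec_mulVec]; exact hpe
    have e2 : Bᵀ *ᵥ (A *ᵥ q) = mu • q := by rw [mulVec_mulVec]; exact hqe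
    set Y := vecMulVec p q with hY
    set Z := vecMulVec (A *ᵥ q) (Bᵀ *ᵥ p) with hZ
    have hTY : A * Yᵀ * B = Z := tstein_vmv A B p q
    have hTZ : A * Zᵀ * B = Y := by
      rw [hZ, tstein_vmv, e1, e2, hY]
      ext i j
      simp only [vecMulVec_apply, Pi.smul_apply, smul_eq_mul]
      linear_combination p i * q j * hprod
    have hX : A * (Y + Z)ᵀ * B = Y + Z := by
      rw [transpose_add, mul_add, add_mul, hTY, hTZ, add_comm]
    have hYZ0 := key _ hX
    obtain ⟨k0, hk0⟩ := Function.ne_iff.mp hp0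
    obtain ⟨l0, hl0⟩ := Function.ne_iff.mp hq0
    have hent : ∀ k l, (A *ᵥ q) k * ((Bᵀ *ᵥ p) l) = -(p k * q l) := by
      intro k l
      have := congrFun (congrFun hYZ0 k) l
      simp only [Matrix.add_apply, hY, hZ, vecMulVec_apply, Matrix.zero_apply] at this
      linear_combination this
    have hBp0 : (Bᵀ *ᵥ p) l0 ≠ 0 := by
      intro hz
      have := hent k0 l0
      rw [hz, mul_zero] at this
      exact mul_ne_zero hk0 hl0 (by linear_combination this)
    have hsum : (mu * q l0) * (Bᵀ *ᵥ p) l0 = (-q l0) * ((Bᵀ *ᵥ p) l0) := by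
      have h1 : (Bᵀ *ᵥ (A *ᵥ q)) l0 = mu * q l0 := by
        rw [e2]; simp
      calc (mu * q l0) * (Bᵀ *ᵥ p) l0
          = (Bᵀ *ᵥ (A *ᵥ q)) l0 * (Bᵀ *ᵥ p) l0 := by rw [h1]
        _ = ∑ k, Bᵀ l0 k * ((A *ᵥ q) k * (Bᵀ *ᵥ p) l0) := by
              simp [mulVec, dotProduct, Finset.sum_mul, mul_assoc]
        _ = ∑ k, Bᵀ l0 k * (-(p k * q l0)) := by
              exact Finset.sum_congr rfl fun k _ => by rw [hent k l0]
        _ = (-q l0) * ∑ k, Bᵀ l0 k * p k := by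
              rw [Finset.mul_sum]
              exact Finset.sum_congr rfl fun k _ => by ring
        _ = (-q l0) * (Bᵀ *ᵥ p) l0 := by simp [mulVec, dotProduct]
    have hmu1 : mu = -1 := by
      have h2 := mul_right_cancel₀ hBp0 hsum
      have h3 : (mu + 1) * q l0 = 0 := by linear_combination h2
      rcases mul_eq_zero.mp h3 with h | h
      · linear_combination h
      · exact absurd h hl0
    apply hne
    rw [hmu1] at hprod
    linear_combination -hprod
  · -- case lam = mu = -1 with multiplicity > 1
    have hcount' : 1 < (Bᵀ * A).charpoly.roots.count (-1) := by
      have e : Bᵀ * A = (Aᵀ * B)ᵀ := by rw [transpose_mul, transpose_transpose]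
      rw [e, tstein_charpoly_transpose]
      exact hcount
    rcases tstein_key2 _ hcount' with ⟨q₁, q₂, he1, he2, hind⟩ | ⟨q₁, q₂, hq1ne, he1, hchain⟩
    · -- two independent eigenvectors
      have hq1 : q₁ ≠ 0 := by have := hind.ne_zero 0; simpa using this
      have hq2 : q₂ ≠ 0 := by have := hind.ne_zero 1; simpa using this
      set p := A *ᵥ q₁ with hp
      have hBp : Bᵀ *ᵥ p = -q₁ := by rw [hp, mulVec_mulVec]; exact he1
      have hp0 : p ≠ 0 := by
        intro hz
        apply hq1
        rw [hz, mulVec_zero] at hBp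
        simpa using hBp.symm
      have hABp : A *ᵥ (Bᵀ *ᵥ p) = -p := by rw [hBp, mulVec_neg, hp]
      have hBAq : ∀ i : Fin 2, Bᵀ *ᵥ (A *ᵥ ![q₁, q₂] i) = -(![q₁, q₂] i) := by
        intro i
        rw [mulVec_mulVec]
        fin_cases i
        · exact he1
        · exact he2
      have hfix : ∀ i : Fin 2,
          vecMulVec p (![q₁, q₂] i) + vecMulVec (A *ᵥ ![q₁, q₂] i) (Bᵀ *ᵥ p) = 0 := by
        intro i
        apply key
        rw [transpose_add, mul_add, add_mul, tstein_vmv, tstein_vmv, hABp, hBAq i]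
        have : vecMulVec (-p) (-(![q₁, q₂] i)) = vecMulVec p (![q₁, q₂] i) := by
          ext k l; simp [vecMulVec_apply]
        rw [this, add_comm]
      obtain ⟨k0, hk0⟩ := Function.ne_iff.mp hp0
      have hent : ∀ i : Fin 2, ∀ l,
          (A *ᵥ ![q₁, q₂] i) k0 * (Bᵀ *ᵥ p) l = -(p k0 * (![q₁, q₂] i) l) := by
        intro i l
        have := congrFun (congrFun (hfix i) k0) l
        simp only [Matrix.add_apply, vecMulVec_apply, Matrix.zero_apply] at this
        linear_combination this
      set c₁ := (A *ᵥ q₁) k0 with hc₁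
      set c₂ := (A *ᵥ q₂) k0 with hc₂
      have hw1 : ∀ l, c₁ * (Bᵀ *ᵥ p) l = -(p k0 * q₁ l) := by
        intro l; have := hent 0 l; simpa using this
      have hw2 : ∀ l, c₂ * (Bᵀ *ᵥ p) l = -(p k0 * q₂ l) := by
        intro l; have := hent 1 l; simpa using this
      have hcomb : (c₂ * p k0) • q₁ + (-(c₁ * p k0)) • q₂ = 0 := by
        funext l
        simp only [Pi.add_apply, Pi.smul_apply, smul_eq_mul, Pi.zero_apply]
        have a1 := hw1 l
        have a2 := hw2 l
        linear_combination c₂ * a1 - c₁ * a2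
      obtain ⟨hs, ht⟩ := (LinearIndependent.pair_iff.mp hind) _ _ hcomb
      have hc₂0 : c₂ = 0 := by
        rcases mul_eq_zero.mp hs with h | h
        · exact h
        · exact absurd h hk0
      obtain ⟨l1, hl1⟩ := Function.ne_iff.mp hq2
      have := hw2 l1
      rw [hc₂0, zero_mul] at this
      exact mul_ne_zero hk0 hl1 (by linear_combination this)
    · -- Jordan chain case
      have hMq2 : (Bᵀ * A) *ᵥ q₂ = q₁ - q₂ := by
        rw [eq_sub_iff_add_eq]; exact hchain
      set p₁ := A *ᵥ q₁ with hp₁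
      set p₂ := A *ᵥ q₂ with hp₂
      have hBp₁ : Bᵀ *ᵥ p₁ = -q₁ := by rw [hp₁, mulVec_mulVec]; exact he1
      have hBp₂ : Bᵀ *ᵥ p₂ = q₁ - q₂ := by rw [hp₂, mulVec_mulVec]; exact hMq2
      have hp₁0 : p₁ ≠ 0 := by
        intro hz
        apply hq1ne
        rw [hz, mulVec_zero] at hBp₁
        simpa using hBp₁.symm
      set X := vecMulVec p₁ q₁ + (vecMulVec p₁ ((-2 : ℂ) • q₂) + vecMulVec p₂ ((2 : ℂ) • q₁))
        with hXdef
      have hTX : A * Xᵀ * B = X := by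
        rw [hXdef, transpose_add, transpose_add, mul_add, mul_add, add_mul, add_mul,
          tstein_vmv, tstein_vmv, tstein_vmv, mulVec_smul, mulVec_smul, hBp₁, hBp₂,
          ← hp₁, ← hp₂]
        ext k l
        simp only [Matrix.add_apply, vecMulVec_apply, Pi.smul_apply, Pi.sub_apply, Pi.neg_apply,
          smul_eq_mul]
        ring
      have hX0 := key _ hTX
      obtain ⟨k0, hk0⟩ := Function.ne_iff.mp hp₁0
      obtain ⟨l0, hl0⟩ := Function.ne_iff.mp hq1ne
      have hent : ∀ k l,
          p₁ k * q₁ l + (p₁ k * (-2 * q₂ l) + p₂ k * (2 * q₁ l)) = 0 := by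
        intro k l
        have := congrFun (congrFun hX0 k) l
        simp only [hXdef, Matrix.add_apply, vecMulVec_apply, Pi.smul_apply, smul_eq_mul,
          Matrix.zero_apply] at this
        linear_combination this
      have hR1 : ∀ k, 2 * q₁ l0 * p₂ k = (2 * q₂ l0 - q₁ l0) * p₁ k := by
        intro k
        have := hent k l0
        linear_combination this
      have h5 : ∀ l, q₁ l0 * q₂ l = q₂ l0 * q₁ l := by
        intro l
        have e2 := hent k0 l
        have r := hR1 k0
        have hfac : p₁ k0 * (4 * (q₁ l0 * q₂ l - q₂ l0 * q₁ l)) = 0 := by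
          linear_combination (-2 * q₁ l0) * e2 + (2 * q₁ l) * r
        rcases mul_eq_zero.mp hfac with h | h
        · exact absurd h hk0
        · linear_combination h / 4
      have h6 : q₁ l0 • q₂ = q₂ l0 • q₁ := by
        funext l
        simpa [smul_eq_mul] using h5 l
      have h7 : q₁ l0 • ((Bᵀ * A) *ᵥ q₂) = q₂ l0 • ((Bᵀ * A) *ᵥ q₁) := by
        rw [← mulVec_smul, ← mulVec_smul, h6]
      rw [hMq2, he1] at h7
      have h8 := congrFun h7 l0
      simp only [Pi.smul_apply, Pi.sub_apply, Pi.neg_apply, smul_eq_mul] at h8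
      have : q₁ l0 * q₁ l0 = 0 := by linear_combination h8
      exact hl0 (by
        have := mul_self_eq_zero.mp this
        exact this)
end

section
/- Suppose A₁ − λB₁ ∈ ℂ^{n₁×n₁} and A₂ − λB₂ ∈ ℂ^{n₂×n₂} are regular matrix pencils with disjoint spectra. Then the only matrices U, V ∈ ℂ^{n₁×n₂} satisfying A₁U = V A₂ and B₁U = V B₂ are U = V = 0. -/
open Matrix Polynomial

lemma pencil_aeval_intertwine {n₁ n₂ : ℕ}
    (C₁ : Matrix (Fin n₁) (Fin n₁) ℂ) (C₂ : Matrix (Fin n₂) (Fin n₂) ℂ)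
    (V : Matrix (Fin n₁) (Fin n₂) ℂ) (h : C₁ * V = V * C₂) (q : ℂ[X]) :
    (aeval C₁ q) * V = V * (aeval C₂ q) := by
  induction q using Polynomial.induction_on with
  | C a => simp [Algebra.algebraMap_eq_smul_one, smul_mul_assoc, mul_smul_comm]
  | add p q hp hq => simp only [map_add, Matrix.add_mul, Matrix.mul_add, hp, hq]
  | monomial n a ih =>
      have e : (C a * X ^ (n + 1) : ℂ[X]) = (C a * X ^ n) * X := by ring
      rw [e, _root_.map_mul (aeval C₁) (C a * X ^ n) X,
        _root_.map_mul (aeval C₂) (C a * X ^ n) X, aeval_X, aeval_X, Matrix.mul_assoc, h,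
        ← Matrix.mul_assoc, ih, Matrix.mul_assoc]

lemma pencil_eval_charpoly {m : ℕ} (M : Matrix (Fin m) (Fin m) ℂ) (r : ℂ) :
    Polynomial.eval r M.charpoly = (r • (1 : Matrix (Fin m) (Fin m) ℂ) - M).det := by
  rw [Matrix.charpoly, ← Polynomial.coe_evalRingHom, RingHom.map_det]
  congr 1
  ext i j
  by_cases hij : i = j <;>
    simp [Matrix.charmatrix_apply, Matrix.one_apply, hij]

lemma pencil_det_aeval_prod {n₁ : ℕ} (C₁ : Matrix (Fin n₁) (Fin n₁) ℂ)
    (s : Multiset ℂ) (hs : ∀ r ∈ s, (C₁ - r • 1).det ≠ 0) :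
    ((aeval C₁) ((s.map (fun r => X - C r)).prod)).det ≠ 0 := by
  induction s using Multiset.induction_on with
  | empty => simp
  | cons r s ih =>
      rw [Multiset.map_cons, Multiset.prod_cons, _root_.map_mul, det_mul]
      refine mul_ne_zero ?_ (ih fun x hx => hs x (Multiset.mem_cons_of_mem hx))
      have : (aeval C₁) (X - C r) = C₁ - r • 1 := by
        simp [Algebra.algebraMap_eq_smul_one]
      rw [this]
      exact hs r (Multiset.mem_cons_self r s)

/-- Suppose `A₁ − λ B₁ ∈ ℂ^{n₁×n₁}` and `A₂ − λ B₂ ∈ ℂ^{n₂×n₂}` are regular matrix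
pencils with disjoint spectra (no common generalized eigenvalue, infinity included):
for every homogeneous pair `(a, b) ≠ (0, 0)`, `b • A₁ − a • B₁` and `b • A₂ − a • B₂`
are not both singular. Then the only matrices `U, V ∈ ℂ^{n₁×n₂}` satisfying
`A₁ U = V A₂` and `B₁ U = V B₂` are `U = V = 0`. -/
theorem pencil_disjoint_spectra_zero {n₁ n₂ : ℕ}
    (A₁ B₁ : Matrix (Fin n₁) (Fin n₁) ℂ) (A₂ B₂ : Matrix (Fin n₂) (Fin n₂) ℂ)
    (hreg₁ : ∃ a b : ℂ, (b • A₁ - a • B₁).det ≠ 0)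
    (hreg₂ : ∃ a b : ℂ, (b • A₂ - a • B₂).det ≠ 0)
    (hdisj : ∀ a b : ℂ, ¬(a = 0 ∧ b = 0) →
      ¬((b • A₁ - a • B₁).det = 0 ∧ (b • A₂ - a • B₂).det = 0))
    (U V : Matrix (Fin n₁) (Fin n₂) ℂ)
    (h1 : A₁ * U = V * A₂) (h2 : B₁ * U = V * B₂) : U = 0 ∧ V = 0 := by
  rcases Nat.eq_zero_or_pos n₁ with hn₁ | hn₁
  · subst hn₁; constructor <;> (ext i j; exact i.elim0)
  rcases Nat.eq_zero_or_pos n₂ with hn₂ | hn₂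
  · subst hn₂; constructor <;> (ext i j; exact j.elim0)
  haveI : Nonempty (Fin n₁) := ⟨⟨0, hn₁⟩⟩
  haveI : Nonempty (Fin n₂) := ⟨⟨0, hn₂⟩⟩
  -- find (a, b) with both pencils nonsingular
  obtain ⟨a₁, b₁, hd₁⟩ := hreg₁
  obtain ⟨a₂, b₂, hd₂⟩ := hreg₂
  set P₁ : ℂ[X] :=
    ((C b₁ + X * C (b₂ - b₁)) • A₁.map C - (C a₁ + X * C (a₂ - a₁)) • B₁.map C).det with hP₁
  set P₂ : ℂ[X] :=
    ((C b₁ + X * C (b₂ - b₁)) • A₂.map C - (C a₁ + X * C (a₂ - a₁)) • B₂.map C).det with hP₂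
  have evalP₁ : ∀ t : ℂ, Polynomial.eval t P₁ =
      ((b₁ + t * (b₂ - b₁)) • A₁ - (a₁ + t * (a₂ - a₁)) • B₁).det := by
    intro t
    rw [hP₁, ← Polynomial.coe_evalRingHom, RingHom.map_det]
    congr 1; ext i j; simp [mul_comm]
  have evalP₂ : ∀ t : ℂ, Polynomial.eval t P₂ =
      ((b₁ + t * (b₂ - b₁)) • A₂ - (a₁ + t * (a₂ - a₁)) • B₂).det := by
    intro t
    rw [hP₂, ← Polynomial.coe_evalRingHom, RingHom.map_det]
    congr 1; ext i j; simp [mul_comm]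
  have hP₁ne : P₁ ≠ 0 := by
    intro h
    apply hd₁
    have := evalP₁ 0
    rw [h] at this
    simpa using this.symm
  have hP₂ne : P₂ ≠ 0 := by
    intro h
    apply hd₂
    have := evalP₂ 1
    rw [h] at this
    simpa using this.symm
  have hprod : P₁ * P₂ ≠ 0 := mul_ne_zero hP₁ne hP₂ne
  have : ∃ t : ℂ, Polynomial.eval t (P₁ * P₂) ≠ 0 := by
    by_contra h
    push_neg at h
    exact hprod (Polynomial.zero_of_eval_zero _ h)
  obtain ⟨t, ht⟩ := this
  rw [Polynomial.eval_mul] at ht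
  obtain ⟨a, b, hM₁, hM₂⟩ :
      ∃ a b : ℂ, (b • A₁ - a • B₁).det ≠ 0 ∧ (b • A₂ - a • B₂).det ≠ 0 :=
    ⟨a₁ + t * (a₂ - a₁), b₁ + t * (b₂ - b₁),
      fun h => ht (by rw [evalP₁ t, evalP₂ t, h, zero_mul]),
      fun h => ht (by rw [evalP₁ t, evalP₂ t, h, mul_zero])⟩
  -- (a, b) ≠ (0, 0)
  have hab : ¬(a = 0 ∧ b = 0) := by
    rintro ⟨rfl, rfl⟩
    apply hM₁
    simp
  -- choose (c, d) with b * c - a * d = 1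
  obtain ⟨c, d, hcd⟩ : ∃ c d : ℂ, b * c - a * d = 1 := by
    by_cases hbz : b = 0
    · have haz : a ≠ 0 := by rintro rfl; exact hab ⟨rfl, hbz⟩
      exact ⟨0, -a⁻¹, by field_simp; ring⟩
    · exact ⟨b⁻¹, 0, by field_simp; ring⟩
  set M₁ := b • A₁ - a • B₁ with hM₁def
  set M₂ := b • A₂ - a • B₂ with hM₂def
  set N₁ := d • A₁ - c • B₁ with hN₁def
  set N₂ := d • A₂ - c • B₂ with hN₂def
  have hMU : M₁ * U = V * M₂ := by
    rw [hM₁def, hM₂def, Matrix.sub_mul, Matrix.mul_sub, Matrix.smul_mul, Matrix.smul_mul,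
      Matrix.mul_smul, Matrix.mul_smul, h1, h2]
  have hNU : N₁ * U = V * N₂ := by
    rw [hN₁def, hN₂def, Matrix.sub_mul, Matrix.mul_sub, Matrix.smul_mul, Matrix.smul_mul,
      Matrix.mul_smul, Matrix.mul_smul, h1, h2]
  have hM₁inv := Matrix.nonsing_inv_mul M₁ (isUnit_iff_ne_zero.mpr hM₁)
  have hM₁inv' := Matrix.mul_nonsing_inv M₁ (isUnit_iff_ne_zero.mpr hM₁)
  have hM₂inv := Matrix.nonsing_inv_mul M₂ (isUnit_iff_ne_zero.mpr hM₂)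
  have hM₂inv' := Matrix.mul_nonsing_inv M₂ (isUnit_iff_ne_zero.mpr hM₂)
  set C₁ := N₁ * M₁⁻¹ with hC₁def
  set C₂ := N₂ * M₂⁻¹ with hC₂def
  have hU : U = M₁⁻¹ * (V * M₂) := by
    rw [← hMU, ← Matrix.mul_assoc, hM₁inv, Matrix.one_mul]
  have hCV : C₁ * V = V * C₂ := by
    have : N₁ * (M₁⁻¹ * (V * M₂)) = V * N₂ := by rw [← hU, hNU]
    calc C₁ * V = N₁ * M₁⁻¹ * V * (M₂ * M₂⁻¹) := by rw [hM₂inv', Matrix.mul_one]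
      _ = (N₁ * (M₁⁻¹ * (V * M₂))) * M₂⁻¹ := by
          simp only [Matrix.mul_assoc]
      _ = V * N₂ * M₂⁻¹ := by rw [this]
      _ = V * C₂ := by rw [hC₂def, Matrix.mul_assoc]
  -- eigenvalues of C₁ avoid roots of charpoly of C₂
  set p := C₂.charpoly with hp
  have hsplit : p = (p.roots.map (fun r => X - C r)).prod :=
    (IsAlgClosed.splits p).eq_prod_roots_of_monic C₂.charpoly_monic
  have hroots : ∀ r ∈ p.roots, (C₁ - r • 1).det ≠ 0 := by
    intro r hr
    have hroot : Polynomial.eval r p = 0 := by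
      have := Polynomial.isRoot_of_mem_roots hr
      simpa [Polynomial.IsRoot] using this
    have hdet2 : (C₂ - r • 1).det = 0 := by
      have h0 : (r • (1 : Matrix (Fin n₂) (Fin n₂) ℂ) - C₂).det = 0 := by
        rw [← pencil_eval_charpoly]; exact hroot
      rw [show C₂ - r • 1 = -(r • 1 - C₂) from (neg_sub _ _).symm, Matrix.det_neg, h0,
        mul_zero]
    -- translate to pencil determinants
    have hNM₂ : N₂ - r • M₂ = (C₂ - r • 1) * M₂ := by
      rw [Matrix.sub_mul, hC₂def, Matrix.mul_assoc, hM₂inv, Matrix.mul_one, Matrix.smul_mul,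
        Matrix.one_mul]
    have hNM₁ : N₁ - r • M₁ = (C₁ - r • 1) * M₁ := by
      rw [Matrix.sub_mul, hC₁def, Matrix.mul_assoc, hM₁inv, Matrix.mul_one, Matrix.smul_mul,
        Matrix.one_mul]
    have hcomb₂ : (d - r * b) • A₂ - (c - r * a) • B₂ = N₂ - r • M₂ := by
      rw [hN₂def, hM₂def]; ext i j
      simp [Matrix.sub_apply, Matrix.smul_apply, smul_eq_mul]; ring
    have hcomb₁ : (d - r * b) • A₁ - (c - r * a) • B₁ = N₁ - r • M₁ := by
      rw [hN₁def, hM₁def]; ext i j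
      simp [Matrix.sub_apply, Matrix.smul_apply, smul_eq_mul]; ring
    have habr : ¬(c - r * a = 0 ∧ d - r * b = 0) := by
      rintro ⟨h₁, h₂⟩
      have hc : c = r * a := by linear_combination h₁
      have hd : d = r * b := by linear_combination h₂
      rw [hc, hd] at hcd
      apply one_ne_zero (α := ℂ)
      linear_combination -hcd
    have hdet2' : ((d - r * b) • A₂ - (c - r * a) • B₂).det = 0 := by
      rw [hcomb₂, hNM₂, det_mul, hdet2, zero_mul]
    have hdet1' : ((d - r * b) • A₁ - (c - r * a) • B₁).det ≠ 0 := by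
      intro h
      exact hdisj (c - r * a) (d - r * b) habr ⟨h, hdet2'⟩
    rw [hcomb₁, hNM₁, det_mul] at hdet1'
    exact fun h => hdet1' (by rw [h, zero_mul])
  -- conclude
  have hWdet : ((aeval C₁) p).det ≠ 0 := by
    have := pencil_det_aeval_prod C₁ p.roots hroots
    rwa [← hsplit] at this
  have hWV : (aeval C₁ p) * V = 0 := by
    rw [pencil_aeval_intertwine C₁ C₂ V hCV p, hp, Matrix.aeval_self_charpoly, Matrix.mul_zero]
  have hV : V = 0 := by
    have hinv := Matrix.nonsing_inv_mul ((aeval C₁) p) (isUnit_iff_ne_zero.mpr hWdet)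
    calc V = (((aeval C₁) p)⁻¹ * ((aeval C₁) p)) * V := by rw [hinv, Matrix.one_mul]
      _ = ((aeval C₁) p)⁻¹ * (((aeval C₁) p) * V) := by rw [Matrix.mul_assoc]
      _ = 0 := by rw [hWV, Matrix.mul_zero]
  refine ⟨?_, hV⟩
  rw [hU, hV, Matrix.zero_mul, Matrix.mul_zero]
end

section
/- If X ∈ ℝ^{n×n} satisfies X = A Xᵀ B + C, then the matrices M = [[BAᵀ, 0], [−CAᵀ, I]] and L = [[I, 0], [ACᵀ, ABᵀ]] satisfy M·[[I],[XAᵀ]] = [[I],[AXᵀ]]·(BAᵀ) and L·[[I],[XAᵀ]] = [[I],[AXᵀ]]. -/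
open Matrix

/-- If `X` solves `X = A Xᵀ B + C`, then with `M = [[BAᵀ, 0], [−CAᵀ, I]]` and
`L = [[I, 0], [ACᵀ, ABᵀ]]`, the stacked matrix `[[I],[XAᵀ]]` satisfies
`M [[I],[XAᵀ]] = [[I],[AXᵀ]] (BAᵀ)` and `L [[I],[XAᵀ]] = [[I],[AXᵀ]]`. -/
theorem tstein_deflating {n : ℕ} (A B C X : Matrix (Fin n) (Fin n) ℝ)
    (hX : X = A * Xᵀ * B + C) :
    fromBlocks (B * Aᵀ) 0 (-(C * Aᵀ)) (1 : Matrix (Fin n) (Fin n) ℝ) * fromRows (1 : Matrix (Fin n) (Fin n) ℝ) (X * Aᵀ) =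
        fromRows (1 : Matrix (Fin n) (Fin n) ℝ) (A * Xᵀ) * (B * Aᵀ) ∧
      fromBlocks 1 0 (A * Cᵀ) (A * Bᵀ) * fromRows (1 : Matrix (Fin n) (Fin n) ℝ) (X * Aᵀ) =
        fromRows (1 : Matrix (Fin n) (Fin n) ℝ) (A * Xᵀ) := by
  have hXT : Xᵀ = Bᵀ * X * Aᵀ + Cᵀ := by
    conv_lhs => rw [hX]
    simp [Matrix.transpose_add, Matrix.transpose_mul, Matrix.mul_assoc]
  constructor
  · rw [fromBlocks_mul_fromRows, fromRows_mul]
    rw [fromRows_ext_iff]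
    constructor
    · simp
    · conv_lhs => rw [hX]
      noncomm_ring
  · rw [fromBlocks_mul_fromRows]
    rw [fromRows_ext_iff]
    constructor
    · simp
    · rw [hXT]
      noncomm_ring
end

section
/- If X ∈ ℝ^{n×n} satisfies X = A Xᵀ B + C, then with M, L as above, [−AXᵀ, I]·M = [−XAᵀ, I] and [−AXᵀ, I]·L = ABᵀ·[−XAᵀ, I]. -/
open Matrix

/-- If `X` solves `X = A Xᵀ B + C`, then with `M = [[BAᵀ, 0], [−CAᵀ, I]]` and
`L = [[I, 0], [ACᵀ, ABᵀ]]`, the row block matrix `[−AXᵀ, I]` satisfies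
`[−AXᵀ, I] M = [−XAᵀ, I]` and `[−AXᵀ, I] L = ABᵀ [−XAᵀ, I]`. -/
theorem tstein_deflating_dual {n : ℕ} (A B C X : Matrix (Fin n) (Fin n) ℝ)
    (hX : X = A * Xᵀ * B + C) :
    fromCols (-(A * Xᵀ)) (1 : Matrix (Fin n) (Fin n) ℝ) * fromBlocks (B * Aᵀ) 0 (-(C * Aᵀ)) 1 =
        fromCols (-(X * Aᵀ)) (1 : Matrix (Fin n) (Fin n) ℝ) ∧
      fromCols (-(A * Xᵀ)) (1 : Matrix (Fin n) (Fin n) ℝ) * fromBlocks 1 0 (A * Cᵀ) (A * Bᵀ) =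
        (A * Bᵀ) * fromCols (-(X * Aᵀ)) (1 : Matrix (Fin n) (Fin n) ℝ) := by
  have h2 : Xᵀ = Bᵀ * X * Aᵀ + Cᵀ := by
    conv_lhs => rw [hX]
    simp [Matrix.transpose_add, Matrix.transpose_mul, Matrix.mul_assoc]
  rw [fromCols_mul_fromBlocks]
  erw [fromCols_mul_fromBlocks, mul_fromCols]
  constructor
  · conv_rhs => rw [hX]
    noncomm_ring
  · conv_lhs => rw [h2]
    noncomm_ring
end

section
/- Suppose the set σ(ABᵀ) is ⊤-reciprocal free (i.e., λμ ≠ 1 for all λ, μ ∈ σ(ABᵀ)). If X₁, X₂ ∈ ℝ^{n×n} satisfy ACᵀ + ABᵀX₁ = X₂ and ACᵀ + ABᵀX₂ᵀ = X₁ᵀ, then X₁ = X₂ᵀ. -/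
open Matrix Polynomial

private lemma charpoly_eval_det {m : ℕ} (M : Matrix (Fin m) (Fin m) ℂ) (μ : ℂ) :
    M.charpoly.eval μ = (μ • (1 : Matrix (Fin m) (Fin m) ℂ) - M).det := by
  rw [Matrix.charpoly,
    show Polynomial.eval μ (charmatrix M).det
        = ((charmatrix M).map (Polynomial.evalRingHom μ)).det from
      (Polynomial.evalRingHom μ).map_det _]
  congr 1
  ext i j
  by_cases h : i = j <;>
    simp [Matrix.map_apply, charmatrix_apply, h, Matrix.one_apply, Matrix.diagonal_apply]

private lemma mem_spectrum_iff_eval {m : ℕ} (M : Matrix (Fin m) (Fin m) ℂ) (μ : ℂ) :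
    μ ∈ spectrum ℂ M ↔ M.charpoly.eval μ = 0 := by
  rw [spectrum.mem_iff, Algebra.algebraMap_eq_smul_one, Matrix.isUnit_iff_isUnit_det,
    isUnit_iff_ne_zero, not_not, charpoly_eval_det]

/-- Suppose the spectrum of `A Bᵀ` (over `ℂ`) is ⊤-reciprocal free, i.e.,
`λ μ ≠ 1` for all eigenvalues `λ, μ` of `A Bᵀ`. If `X₁, X₂ ∈ ℝ^{n×n}` satisfy
`A Cᵀ + A Bᵀ X₁ = X₂` and `A Cᵀ + A Bᵀ X₂ᵀ = X₁ᵀ`, then `X₁ = X₂ᵀ`. -/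
theorem tstein_X1_eq_X2transpose {n : ℕ} (A B C : Matrix (Fin n) (Fin n) ℝ)
    (hfree : ∀ lam mu : ℂ, lam ∈ spectrum ℂ ((A * Bᵀ).map (algebraMap ℝ ℂ)) →
      mu ∈ spectrum ℂ ((A * Bᵀ).map (algebraMap ℝ ℂ)) → lam * mu ≠ 1)
    (X₁ X₂ : Matrix (Fin n) (Fin n) ℝ)
    (h1 : A * Cᵀ + A * Bᵀ * X₁ = X₂)
    (h2 : A * Cᵀ + A * Bᵀ * X₂ᵀ = X₁ᵀ) : X₁ = X₂ᵀ := by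
  by_cases hn : n = 0
  · subst hn; exact Subsingleton.elim _ _
  haveI : Nonempty (Fin n) := ⟨⟨0, Nat.pos_of_ne_zero hn⟩⟩
  set M : Matrix (Fin n) (Fin n) ℝ := A * Bᵀ with hMdef
  set Z : Matrix (Fin n) (Fin n) ℝ := X₁ - X₂ᵀ with hZdef
  suffices hZ0 : Z = 0 by
    have := sub_eq_zero.mp hZ0
    exact this
  -- the real Stein-type equation
  have e1 : M * X₁ = X₂ - A * Cᵀ := by rw [← h1]; abel
  have e2 : M * X₂ᵀ = X₁ᵀ - A * Cᵀ := by rw [← h2]; abel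
  have e : M * Z = X₂ - X₁ᵀ := by rw [hZdef, mul_sub, e1, e2]; abel
  have ht : Zᵀ = -(M * Z) := by
    rw [e, hZdef, transpose_sub, transpose_transpose]; abel
  have hstein : Z = M * Z * Mᵀ := by
    calc Z = Zᵀᵀ := (transpose_transpose Z).symm
    _ = (-(M * Z))ᵀ := by rw [ht]
    _ = -(Zᵀ * Mᵀ) := by rw [transpose_neg, transpose_mul]
    _ = -(-(M * Z) * Mᵀ) := by rw [ht]
    _ = M * Z * Mᵀ := by rw [neg_mul, neg_neg]
  -- complexify
  set M' : Matrix (Fin n) (Fin n) ℂ := M.map (algebraMap ℝ ℂ) with hM'def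
  set Z' : Matrix (Fin n) (Fin n) ℂ := Z.map (algebraMap ℝ ℂ) with hZ'def
  have hstein' : Z' = M' * Z' * M'ᵀ := by
    rw [hZ'def, hM'def]
    conv_lhs => rw [hstein]
    rw [Matrix.map_mul, Matrix.map_mul, Matrix.transpose_map]
  have hpow : ∀ k : ℕ, M' ^ k * Z' * (M'ᵀ) ^ k = Z' := by
    intro k
    induction k with
    | zero => simp
    | succ k ih =>
      calc M' ^ (k + 1) * Z' * (M'ᵀ) ^ (k + 1)
          = M' ^ k * (M' * Z' * M'ᵀ) * (M'ᵀ) ^ k := by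
            rw [pow_succ, pow_succ']; noncomm_ring
      _ = M' ^ k * Z' * (M'ᵀ) ^ k := by rw [← hstein']
      _ = Z' := ih
  set p : ℂ[X] := (M'ᵀ).charpoly with hpdef
  have hp0 : aeval M'ᵀ p = 0 := Matrix.aeval_self_charpoly _
  have hdeg : p.natDegree = n := by
    rw [hpdef, Matrix.charpoly_natDegree_eq_dim, Fintype.card_fin]
  set q : ℂ[X] := ∑ k ∈ Finset.range (n + 1), Polynomial.C (p.coeff k) * X ^ (n - k)
    with hqdef
  have expand : aeval M' q = ∑ k ∈ Finset.range (n + 1), p.coeff k • M' ^ (n - k) := by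
    rw [hqdef, map_sum]
    refine Finset.sum_congr rfl fun k _ => ?_
    rw [_root_.map_mul, aeval_C, aeval_X_pow, ← Algebra.smul_def]
  have hq0 : aeval M' q * Z' = 0 := by
    rw [expand, Finset.sum_mul]
    have step : ∀ k ∈ Finset.range (n + 1),
        (p.coeff k • M' ^ (n - k)) * Z' = p.coeff k • (M' ^ n * Z' * (M'ᵀ) ^ k) := by
      intro k hk
      rw [smul_mul_assoc]
      congr 1
      conv_lhs => rw [← hpow k]
      rw [← mul_assoc, ← mul_assoc, ← pow_add,
        Nat.sub_add_cancel (Nat.lt_succ_iff.mp (Finset.mem_range.mp hk))]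
    rw [Finset.sum_congr rfl step]
    have : ∑ k ∈ Finset.range (n + 1), p.coeff k • (M' ^ n * Z' * (M'ᵀ) ^ k)
        = M' ^ n * Z' * aeval M'ᵀ p := by
      rw [Polynomial.aeval_eq_sum_range' (by rw [hdeg]; exact Nat.lt_succ_self n),
        Finset.mul_sum]
      exact Finset.sum_congr rfl fun k _ => by rw [mul_smul_comm]
    rw [this, hp0, mul_zero]
  have hspec_ne : (spectrum ℂ M').Nonempty :=
    spectrum.nonempty_of_isAlgClosed_of_finiteDimensional ℂ M'
  have hmap : spectrum ℂ (aeval M' q) = (fun k => eval k q) '' spectrum ℂ M' :=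
    spectrum.map_polynomial_aeval_of_nonempty M' q hspec_ne
  have h0 : (0 : ℂ) ∉ spectrum ℂ (aeval M' q) := by
    rw [hmap]
    rintro ⟨lam, hlam, hev⟩
    simp only at hev
    by_cases hl0 : lam = 0
    · subst hl0
      rw [hqdef] at hev
      simp only [eval_finset_sum, eval_mul, eval_C, eval_pow, eval_X] at hev
      rw [Finset.sum_eq_single n (fun k hk hkn => by
          rw [zero_pow (Nat.sub_ne_zero_of_lt
            (lt_of_le_of_ne (Nat.lt_succ_iff.mp (Finset.mem_range.mp hk)) hkn)), mul_zero])
        (fun h => absurd (Finset.self_mem_range_succ n) h)] at hev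
      rw [Nat.sub_self, pow_zero, mul_one] at hev
      have : p.coeff n = 1 := by
        have := (Matrix.charpoly_monic M'ᵀ).leadingCoeff
        rwa [Polynomial.leadingCoeff, hdeg] at this
      rw [this] at hev
      exact one_ne_zero hev
    · have hkey : eval lam q = lam ^ n * p.eval lam⁻¹ := by
        have hrhs : lam ^ n * p.eval lam⁻¹
            = ∑ k ∈ Finset.range (n + 1), p.coeff k * lam ^ (n - k) := by
          rw [Polynomial.eval_eq_sum_range' (n := n + 1)
            (by rw [hdeg]; exact Nat.lt_succ_self n), Finset.mul_sum]
          refine Finset.sum_congr rfl fun k hk => ?_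
          rw [pow_sub₀ lam hl0 (Nat.lt_succ_iff.mp (Finset.mem_range.mp hk)), inv_pow]
          ring
        rw [hrhs, hqdef]
        simp only [eval_finset_sum, eval_mul, eval_C, eval_pow, eval_X]
      rw [hkey] at hev
      have hpinv : p.eval lam⁻¹ = 0 :=
        (mul_eq_zero.mp hev).resolve_left (pow_ne_zero n hl0)
      have hmem : lam⁻¹ ∈ spectrum ℂ M' := by
        rw [mem_spectrum_iff_eval, charpoly_eval_det, ← Matrix.det_transpose,
          transpose_sub, transpose_smul, transpose_one]
        rw [hpdef, charpoly_eval_det] at hpinv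
        exact hpinv
      exact hfree lam lam⁻¹ hlam hmem (mul_inv_cancel₀ hl0)
  have hunit : IsUnit (aeval M' q) := (spectrum.zero_notMem_iff ℂ).mp h0
  have hZ'0 : Z' = 0 := by
    have := hq0
    rcases hunit with ⟨u, hu⟩
    rw [← hu] at this
    calc Z' = ↑u⁻¹ * (↑u * Z') := by rw [← mul_assoc, Units.inv_mul, one_mul]
    _ = 0 := by rw [this, mul_zero]
  ext i j
  have := congrFun (congrFun hZ'0 i) j
  simp only [hZ'def, Matrix.map_apply, Matrix.zero_apply] at this
  exact (algebraMap ℝ ℂ).injective this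
end

section
/- If X solves X = A Xᵀ B + C, then with M₁ = [[AᵀB, 0], [−C − ACᵀB, I]] and L₁ = [[I, 0], [0, ABᵀ]], one has M₁·[[I],[X]] = L₁·[[I],[X]]·(AᵀB). -/
open Matrix

/-- If `X` solves `X = A Xᵀ B + C`, then with `M₁ = [[AᵀB, 0], [−C − ACᵀB, I]]`
and `L₁ = [[I, 0], [0, ABᵀ]]`, one has `M₁ [[I],[X]] = L₁ [[I],[X]] (AᵀB)`. -/
theorem tstein_deflating_alt {n : ℕ} (A B C X : Matrix (Fin n) (Fin n) ℝ)
    (hX : X = A * Xᵀ * B + C) :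
    fromBlocks (Aᵀ * B) 0 (-(C + A * Cᵀ * B)) (1 : Matrix (Fin n) (Fin n) ℝ) * fromRows (1 : Matrix (Fin n) (Fin n) ℝ) X =
      fromBlocks (1 : Matrix (Fin n) (Fin n) ℝ) 0 0 (A * Bᵀ) * fromRows (1 : Matrix (Fin n) (Fin n) ℝ) X * (Aᵀ * B) := by
  have hT : Xᵀ = Bᵀ * X * Aᵀ + Cᵀ := by
    conv_lhs => rw [hX]
    simp [Matrix.transpose_add, Matrix.transpose_mul, Matrix.mul_assoc]
  have h2 : X = A * Bᵀ * X * (Aᵀ * B) + (A * Cᵀ * B + C) := by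
    calc X = A * Xᵀ * B + C := hX
    _ = A * (Bᵀ * X * Aᵀ + Cᵀ) * B + C := by rw [hT]
    _ = _ := by noncomm_ring
  have h3 : -(A * Cᵀ * B) + -C + X = A * Bᵀ * X * (Aᵀ * B) := by
    conv_lhs => rw [h2]
    noncomm_ring
  rw [Matrix.fromBlocks_mul_fromRows, Matrix.fromBlocks_mul_fromRows, Matrix.fromRows_mul]
  simp [Matrix.neg_mul, Matrix.add_mul, h3]
end

section
/- Suppose ρ(ABᵀ)·ρ(AᵀB) < 1 where ρ is the spectral radius. Define C₀ = C + ACᵀB and C_k = C_{k−1} + (ABᵀ)^{2^{k−1}} C_{k−1} (AᵀB)^{2^{k−1}}. Then C_k = Σ_{i=0}^{2^k − 1} (ABᵀ)^i C₀ (AᵀB)^i, and C_k converges to the unique solution X of X = ABᵀ X AᵀB + C₀ as k → ∞. -/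
open Matrix Filter

namespace SmithAux

open scoped NNReal ENNReal

attribute [local instance] Matrix.frobeniusSeminormedAddCommGroup
  Matrix.frobeniusNormedAddCommGroup Matrix.frobeniusNormedSpace
  Matrix.frobeniusNormedRing Matrix.frobeniusNormedAlgebra

variable {n : ℕ}


lemma nnnorm_map_algebraMap (M : Matrix (Fin n) (Fin n) ℝ) :
    ‖M.map (algebraMap ℝ ℂ)‖₊ = ‖M‖₊ :=
  Matrix.frobenius_nnnorm_map_eq M _ fun a => by simp

lemma map_pow' (M : Matrix (Fin n) (Fin n) ℝ) (k : ℕ) :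
    (M.map (algebraMap ℝ ℂ)) ^ k = (M ^ k).map (algebraMap ℝ ℂ) := by
  induction k with
  | zero => simp [Matrix.map_one (algebraMap ℝ ℂ) (map_zero _) (map_one _)]
  | succ k ih =>
      rw [pow_succ, pow_succ, ih, Matrix.map_mul]

lemma radius_ne_top (M : Matrix (Fin n) (Fin n) ℂ) :
    spectralRadius ℂ M ≠ ⊤ := by
  refine ne_top_of_le_ne_top ?_ (spectrum.spectralRadius_le_pow_nnnorm_pow_one_div ℂ M 0)
  exact ENNReal.mul_ne_top (ENNReal.rpow_ne_top_of_nonneg (by norm_num) ENNReal.coe_ne_top)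
    (ENNReal.rpow_ne_top_of_nonneg (by norm_num) ENNReal.coe_ne_top)


lemma norm_bound (M N : Matrix (Fin n) (Fin n) ℝ)
    (hρ : spectralRadius ℂ (M.map (algebraMap ℝ ℂ)) *
        spectralRadius ℂ (N.map (algebraMap ℝ ℂ)) < 1) :
    ∃ r : ℝ≥0, r < 1 ∧ ∀ᶠ k in atTop, ‖M ^ k‖₊ * ‖N ^ k‖₊ ≤ r ^ k := by
  have h1 := spectrum.pow_nnnorm_pow_one_div_tendsto_nhds_spectralRadius (M.map (algebraMap ℝ ℂ))
  have h2 := spectrum.pow_nnnorm_pow_one_div_tendsto_nhds_spectralRadius (N.map (algebraMap ℝ ℂ))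
  have hprod : Tendsto
      (fun k : ℕ => ((‖(M.map (algebraMap ℝ ℂ)) ^ k‖₊ * ‖(N.map (algebraMap ℝ ℂ)) ^ k‖₊ : ℝ≥0) : ℝ≥0∞) ^ (1 / k : ℝ)) atTop
      (nhds (spectralRadius ℂ (M.map (algebraMap ℝ ℂ)) * spectralRadius ℂ (N.map (algebraMap ℝ ℂ)))) := by
    have h := ENNReal.Tendsto.mul h1 (Or.inr (radius_ne_top (N.map (algebraMap ℝ ℂ)))) h2
      (Or.inr (radius_ne_top (M.map (algebraMap ℝ ℂ))))
    refine h.congr fun k => ?_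
    rw [ENNReal.coe_mul, ENNReal.mul_rpow_of_nonneg _ _ (by positivity)]
  obtain ⟨r', hr1, hr2⟩ := exists_between hρ
  lift r' to ℝ≥0 using (hr2.trans ENNReal.one_lt_top).ne with r
  refine ⟨r, by exact_mod_cast hr2, ?_⟩
  filter_upwards [hprod.eventually_lt_const hr1, eventually_ge_atTop 1] with k hk hk1
  have hkne : (k : ℝ) ≠ 0 := Nat.cast_ne_zero.mpr (by omega)
  have hlt : ((‖(M.map (algebraMap ℝ ℂ)) ^ k‖₊ * ‖(N.map (algebraMap ℝ ℂ)) ^ k‖₊ : ℝ≥0) : ℝ≥0∞) < (r : ℝ≥0∞) ^ k := by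
    have h := ENNReal.rpow_lt_rpow hk (by positivity : (0:ℝ) < (k : ℝ))
    rwa [← ENNReal.rpow_mul, one_div, inv_mul_cancel₀ hkne, ENNReal.rpow_one,
      ENNReal.rpow_natCast] at h
  rw [← ENNReal.coe_pow, ENNReal.coe_lt_coe, map_pow', map_pow',
    nnnorm_map_algebraMap, nnnorm_map_algebraMap] at hlt
  exact hlt.le


/-- sandwich multiplication as a continuous linear map -/
noncomputable def sandwich (M N : Matrix (Fin n) (Fin n) ℝ) :
    Matrix (Fin n) (Fin n) ℝ →L[ℝ] Matrix (Fin n) (Fin n) ℝ :=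
  LinearMap.toContinuousLinearMap
    { toFun := fun X => M * X * N
      map_add' := fun X Y => by noncomm_ring
      map_smul' := fun c X => by simp [Matrix.mul_smul, Matrix.smul_mul] }

lemma aux (M N D : Matrix (Fin n) (Fin n) ℝ)
    (hρ : spectralRadius ℂ (M.map (algebraMap ℝ ℂ)) *
        spectralRadius ℂ (N.map (algebraMap ℝ ℂ)) < 1) :
    ∃ X : Matrix (Fin n) (Fin n) ℝ, X = M * X * N + D ∧
      (∀ Y, Y = M * Y * N + D → Y = X) ∧
      ∀ a b : Fin n,
        Tendsto (fun m => (∑ i ∈ Finset.range m, M ^ i * D * N ^ i) a b)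
          atTop (nhds (X a b)) := by
  obtain ⟨r, hr1, hev⟩ := norm_bound M N hρ
  have key : ∀ᶠ k in atTop, ‖M ^ k * D * N ^ k‖ ≤ ‖D‖ * (r : ℝ) ^ k := by
    filter_upwards [hev] with k hk
    calc ‖M ^ k * D * N ^ k‖ ≤ ‖M ^ k‖ * ‖D‖ * ‖N ^ k‖ :=
          (norm_mul_le _ _).trans
            (mul_le_mul_of_nonneg_right (norm_mul_le _ _) (norm_nonneg _))
      _ = ‖D‖ * (‖M ^ k‖ * ‖N ^ k‖) := by ring
      _ ≤ ‖D‖ * (r : ℝ) ^ k := by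
          refine mul_le_mul_of_nonneg_left ?_ (norm_nonneg _)
          have : (‖M ^ k‖₊ * ‖N ^ k‖₊ : ℝ≥0) ≤ r ^ k := hk
          exact_mod_cast this
  have hsum : Summable (fun i : ℕ => M ^ i * D * N ^ i) := by
    have hgeo : Summable (fun i : ℕ => ‖D‖ * (r : ℝ) ^ i) :=
      (summable_geometric_of_lt_one r.coe_nonneg (by exact_mod_cast hr1)).mul_left _
    exact hgeo.of_norm_bounded_eventually (Nat.cofinite_eq_atTop ▸ key)
  set X := ∑' i : ℕ, M ^ i * D * N ^ i with hXdef
  have hX : HasSum (fun i : ℕ => M ^ i * D * N ^ i) X := hsum.hasSum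
  have heq : X = M * X * N + D := by
    have h1 : HasSum (fun i : ℕ => M ^ (i + 1) * D * N ^ (i + 1))
        (X - ∑ i ∈ Finset.range 1, M ^ i * D * N ^ i) :=
      (hasSum_nat_add_iff' 1).mpr hX
    have hsw : ∀ Z, (sandwich M N) Z = M * Z * N := fun _ => rfl
    have h2 : HasSum (fun i : ℕ => M ^ (i + 1) * D * N ^ (i + 1)) (M * X * N) := by
      have h := hX.mapL (sandwich M N)
      simp only [hsw] at h
      have e : (fun i : ℕ => M * (M ^ i * D * N ^ i) * N) =
          fun i : ℕ => M ^ (i + 1) * D * N ^ (i + 1) := by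
        funext i
        rw [pow_succ' M, pow_succ N]
        noncomm_ring
      rwa [e] at h
    have h3 := h1.unique h2
    rw [Finset.sum_range_one] at h3
    simp only [pow_zero, one_mul, mul_one] at h3
    rw [← h3]
    abel
  refine ⟨X, heq, ?_, ?_⟩
  · intro Y hY
    by_contra hne
    set Z := Y - X with hZdef
    have hZ : Z = M * Z * N := by
      rw [hZdef]
      nth_rewrite 1 [hY, heq]
      noncomm_ring
    have hZk : ∀ k : ℕ, Z = M ^ k * Z * N ^ k := by
      intro k
      induction k with
      | zero => simp
      | succ k ih =>
          nth_rewrite 1 [hZ]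
          rw [pow_succ', pow_succ]
          nth_rewrite 1 [ih]
          noncomm_ring
    have hZne : ‖Z‖₊ ≠ 0 := by
      simp only [ne_eq, nnnorm_eq_zero, hZdef, sub_eq_zero]
      exact hne
    obtain ⟨k, hk, hk1⟩ := (hev.and (eventually_ge_atTop 1)).exists
    have hb : ‖Z‖₊ ≤ (r ^ k) * ‖Z‖₊ := by
      calc ‖Z‖₊ = ‖M ^ k * Z * N ^ k‖₊ := by rw [← hZk k]
        _ ≤ ‖M ^ k‖₊ * ‖Z‖₊ * ‖N ^ k‖₊ :=
            (nnnorm_mul_le _ _).trans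
              (mul_le_mul_of_nonneg_right (nnnorm_mul_le _ _) zero_le)
        _ = (‖M ^ k‖₊ * ‖N ^ k‖₊) * ‖Z‖₊ := by ring
        _ ≤ (r ^ k) * ‖Z‖₊ := mul_le_mul_of_nonneg_right hk zero_le
    have hrk : r ^ k < 1 := pow_lt_one₀ zero_le hr1 (by omega)
    have : (r ^ k) * ‖Z‖₊ < 1 * ‖Z‖₊ :=
      mul_lt_mul_of_pos_right hrk (pos_iff_ne_zero.mpr hZne)
    rw [one_mul] at this
    exact absurd (hb.trans_lt this) (lt_irrefl _)
  · intro a b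
    have hT : Tendsto (fun m => ∑ i ∈ Finset.range m, M ^ i * D * N ^ i)
        atTop (nhds X) := hX.tendsto_sum_nat
    have hE : Continuous fun Z : Matrix (Fin n) (Fin n) ℝ => Z a b := by
      have : Continuous (LinearMap.toContinuousLinearMap
        { toFun := fun Z : Matrix (Fin n) (Fin n) ℝ => Z a b
          map_add' := fun _ _ => rfl
          map_smul' := fun _ _ => rfl } : Matrix (Fin n) (Fin n) ℝ →L[ℝ] ℝ) :=
        ContinuousLinearMap.continuous _
      exact this
    exact ((hE.tendsto X).comp hT)

end SmithAux

/-- Smith iteration for the ⊤-Stein equation. Suppose `ρ(ABᵀ)·ρ(AᵀB) < 1`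
(spectral radii over `ℂ`). Define `C₀ = C + A Cᵀ B` and
`C_k = C_{k−1} + (ABᵀ)^{2^{k−1}} C_{k−1} (AᵀB)^{2^{k−1}}`. Then
`C_k = Σ_{i=0}^{2^k − 1} (ABᵀ)^i C₀ (AᵀB)^i`, and `C_k` converges to the unique
solution `X` of `X = ABᵀ X AᵀB + C₀`. -/
theorem smith_iteration {n : ℕ} (A B C : Matrix (Fin n) (Fin n) ℝ)
    (hρ : spectralRadius ℂ ((A * Bᵀ).map (algebraMap ℝ ℂ)) *
        spectralRadius ℂ ((Aᵀ * B).map (algebraMap ℝ ℂ)) < 1)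
    (Cseq : ℕ → Matrix (Fin n) (Fin n) ℝ)
    (h0 : Cseq 0 = C + A * Cᵀ * B)
    (hrec : ∀ k : ℕ,
      Cseq (k + 1) = Cseq k + (A * Bᵀ) ^ 2 ^ k * Cseq k * (Aᵀ * B) ^ 2 ^ k) :
    (∀ k : ℕ, Cseq k =
        ∑ i ∈ Finset.range (2 ^ k),
          (A * Bᵀ) ^ i * (C + A * Cᵀ * B) * (Aᵀ * B) ^ i) ∧
      (∃! X : Matrix (Fin n) (Fin n) ℝ,
          X = (A * Bᵀ) * X * (Aᵀ * B) + (C + A * Cᵀ * B)) ∧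
      ∀ X : Matrix (Fin n) (Fin n) ℝ,
        X = (A * Bᵀ) * X * (Aᵀ * B) + (C + A * Cᵀ * B) →
          Tendsto Cseq atTop (nhds X) := by
  have part1 : ∀ k : ℕ, Cseq k = ∑ i ∈ Finset.range (2 ^ k),
      (A * Bᵀ) ^ i * (C + A * Cᵀ * B) * (Aᵀ * B) ^ i := by
    intro k
    induction k with
    | zero => simpa using h0
    | succ k ih =>
        rw [hrec k, ih, pow_succ 2 k, mul_two, Finset.sum_range_add]
        congr 1
        rw [Finset.mul_sum, Finset.sum_mul]
        refine Finset.sum_congr rfl fun i _ => ?_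
        rw [pow_add, pow_add, pow_mul_comm (Aᵀ * B) (2 ^ k) i]
        noncomm_ring
  obtain ⟨X, hXeq, huniq, htend⟩ :=
    SmithAux.aux (A * Bᵀ) (Aᵀ * B) (C + A * Cᵀ * B) hρ
  refine ⟨part1, ⟨X, hXeq, fun y hy => huniq y hy⟩, ?_⟩
  intro Y hY
  have hYX : Y = X := huniq Y hY
  subst hYX
  have h2 : Tendsto (fun k : ℕ => 2 ^ k) atTop atTop :=
    tendsto_pow_atTop_atTop_of_one_lt _root_.one_lt_two
  rw [show Cseq = fun k => ∑ i ∈ Finset.range (2 ^ k),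
      (A * Bᵀ) ^ i * (C + A * Cᵀ * B) * (Aᵀ * B) ^ i from funext part1]
  refine tendsto_pi_nhds.mpr fun a => tendsto_pi_nhds.mpr fun b => ?_
  exact (htend a b).comp h2
end

section
/- Let S(X) = X − AXᵀB be invertible as a linear operator on ℝ^{n×n}, and suppose X solves S(X) = C and X + δX solves the perturbed equation (X+δX) = (A+δA)(X+δX)ᵀ(B+δB) + (C+δC). If ‖S⁻¹‖·Δ < 1 where Δ = ‖A‖_F‖δB‖_F + ‖δA‖_F(‖B‖_F + ‖δB‖_F), then ‖δX‖_F ≤ ‖S⁻¹‖·(‖δC‖_F + Δ·‖X‖_F) / (1 − ‖S⁻¹‖·Δ). -/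
open Matrix

attribute [local instance] Matrix.frobeniusNormedAddCommGroup Matrix.frobeniusNormedRing
  Matrix.frobeniusNormedSpace

/-- Perturbation bound for the ⊤-Stein equation. Let `S(X) = X − A Xᵀ B` be an
invertible (continuous) linear operator on `ℝ^{n×n}` (with the Frobenius norm).
Suppose `X` solves `S(X) = C` and `X + δX` solves the perturbed equation
`X + δX = (A + δA)(X + δX)ᵀ(B + δB) + (C + δC)`. If `‖S⁻¹‖ Δ < 1`, where
`Δ = ‖A‖_F ‖δB‖_F + ‖δA‖_F (‖B‖_F + ‖δB‖_F)`, then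
`‖δX‖_F ≤ ‖S⁻¹‖ (‖δC‖_F + Δ ‖X‖_F) / (1 − ‖S⁻¹‖ Δ)`. -/
theorem tstein_perturbation_bound {n : ℕ}
    (A B C X δA δB δC δX : Matrix (Fin n) (Fin n) ℝ)
    (S : Matrix (Fin n) (Fin n) ℝ ≃L[ℝ] Matrix (Fin n) (Fin n) ℝ)
    (hS : ∀ Z : Matrix (Fin n) (Fin n) ℝ, S Z = Z - A * Zᵀ * B)
    (hX : X - A * Xᵀ * B = C)
    (hpert : X + δX = (A + δA) * (X + δX)ᵀ * (B + δB) + (C + δC))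
    (hsmall : (@Norm.norm _ (ContinuousLinearMap.hasOpNorm (𝕜 := ℝ) (E := Matrix (Fin n) (Fin n) ℝ)
          (F := Matrix (Fin n) (Fin n) ℝ) (σ₁₂ := RingHom.id ℝ))
          (S.symm : Matrix (Fin n) (Fin n) ℝ →L[ℝ] Matrix (Fin n) (Fin n) ℝ)) *
        (‖A‖ * ‖δB‖ + ‖δA‖ * (‖B‖ + ‖δB‖)) < 1) :
    ‖δX‖ ≤ (@Norm.norm _ (ContinuousLinearMap.hasOpNorm (𝕜 := ℝ) (E := Matrix (Fin n) (Fin n) ℝ)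
          (F := Matrix (Fin n) (Fin n) ℝ) (σ₁₂ := RingHom.id ℝ))
          (S.symm : Matrix (Fin n) (Fin n) ℝ →L[ℝ] Matrix (Fin n) (Fin n) ℝ)) *
        (‖δC‖ + (‖A‖ * ‖δB‖ + ‖δA‖ * (‖B‖ + ‖δB‖)) * ‖X‖) /
        (1 - (@Norm.norm _ (ContinuousLinearMap.hasOpNorm (𝕜 := ℝ) (E := Matrix (Fin n) (Fin n) ℝ)
          (F := Matrix (Fin n) (Fin n) ℝ) (σ₁₂ := RingHom.id ℝ))
          (S.symm : Matrix (Fin n) (Fin n) ℝ →L[ℝ] Matrix (Fin n) (Fin n) ℝ)) *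
          (‖A‖ * ‖δB‖ + ‖δA‖ * (‖B‖ + ‖δB‖))) := by
  set k : ℝ := (@Norm.norm _ (ContinuousLinearMap.hasOpNorm (𝕜 := ℝ) (E := Matrix (Fin n) (Fin n) ℝ)
          (F := Matrix (Fin n) (Fin n) ℝ) (σ₁₂ := RingHom.id ℝ))
          (S.symm : Matrix (Fin n) (Fin n) ℝ →L[ℝ] Matrix (Fin n) (Fin n) ℝ)) with hk
  set Δ : ℝ := ‖A‖ * ‖δB‖ + ‖δA‖ * (‖B‖ + ‖δB‖) with hΔ
  have hk0 : 0 ≤ k := norm_nonneg _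
  -- key identity
  have hkey : S δX = δC + A * (X + δX)ᵀ * δB + δA * (X + δX)ᵀ * (B + δB) := by
    rw [hS]
    have := hpert
    rw [← hX] at this
    have h2 : δX - A * δXᵀ * B
        = δC + A * (X + δX)ᵀ * δB + δA * (X + δX)ᵀ * (B + δB) := by
      have expand : (A + δA) * (X + δX)ᵀ * (B + δB)
          = A * (X + δX)ᵀ * B + A * (X + δX)ᵀ * δB + δA * (X + δX)ᵀ * (B + δB) := by
        noncomm_ring
      rw [expand] at this
      have hT : (X + δX)ᵀ = Xᵀ + δXᵀ := Matrix.transpose_add _ _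
      rw [hT] at this ⊢
      -- this : X + δX = A*(Xᵀ+δXᵀ)*B + A*(Xᵀ+δXᵀ)*δB + δA*(Xᵀ+δXᵀ)*(B+δB) + (X - A*Xᵀ*B + δC)
      have : δX - A * δXᵀ * B - (A * (Xᵀ + δXᵀ) * δB + δA * (Xᵀ + δXᵀ) * (B + δB) + δC) = 0 := by
        linear_combination (norm := noncomm_ring) this
      linear_combination (norm := noncomm_ring) this
    exact h2
  have hδX : δX = S.symm (δC + A * (X + δX)ᵀ * δB + δA * (X + δX)ᵀ * (B + δB)) := by
    rw [← hkey]; exact (S.symm_apply_apply δX).symm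
  have hbound : ‖δX‖ ≤ k * (‖δC‖ + Δ * (‖X‖ + ‖δX‖)) := by
    calc ‖δX‖ = ‖S.symm (δC + A * (X + δX)ᵀ * δB + δA * (X + δX)ᵀ * (B + δB))‖ := by
          rw [← hδX]
      _ ≤ k * ‖δC + A * (X + δX)ᵀ * δB + δA * (X + δX)ᵀ * (B + δB)‖ :=
          (S.symm : Matrix (Fin n) (Fin n) ℝ →L[ℝ] Matrix (Fin n) (Fin n) ℝ).le_opNorm _
      _ ≤ k * (‖δC‖ + Δ * (‖X‖ + ‖δX‖)) := by
          apply mul_le_mul_of_nonneg_left _ hk0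
          have h1 : ‖A * (X + δX)ᵀ * δB‖ ≤ ‖A‖ * ‖δB‖ * (‖X‖ + ‖δX‖) := by
            calc ‖A * (X + δX)ᵀ * δB‖ ≤ ‖A * (X + δX)ᵀ‖ * ‖δB‖ := norm_mul_le _ _
              _ ≤ ‖A‖ * ‖(X + δX)ᵀ‖ * ‖δB‖ := by
                  gcongr; exact norm_mul_le _ _
              _ ≤ ‖A‖ * ‖δB‖ * (‖X‖ + ‖δX‖) := by
                  rw [Matrix.frobenius_norm_transpose]
                  have h := norm_add_le X δX
                  nlinarith [mul_nonneg (mul_nonneg (norm_nonneg A) (norm_nonneg δB))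
                    (sub_nonneg.mpr h)]
          have h2 : ‖δA * (X + δX)ᵀ * (B + δB)‖ ≤ ‖δA‖ * (‖B‖ + ‖δB‖) * (‖X‖ + ‖δX‖) := by
            calc ‖δA * (X + δX)ᵀ * (B + δB)‖ ≤ ‖δA * (X + δX)ᵀ‖ * ‖B + δB‖ := norm_mul_le _ _
              _ ≤ ‖δA‖ * ‖(X + δX)ᵀ‖ * ‖B + δB‖ := by
                  gcongr; exact norm_mul_le _ _
              _ ≤ ‖δA‖ * (‖B‖ + ‖δB‖) * (‖X‖ + ‖δX‖) := by
                  rw [Matrix.frobenius_norm_transpose]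
                  have h3 := norm_add_le X δX
                  have h4 := norm_add_le B δB
                  nlinarith [mul_nonneg (mul_nonneg (norm_nonneg δA) (norm_nonneg (B + δB)))
                    (sub_nonneg.mpr h3),
                    mul_nonneg (mul_nonneg (norm_nonneg δA) (add_nonneg (norm_nonneg X) (norm_nonneg δX)))
                    (sub_nonneg.mpr h4)]
          calc ‖δC + A * (X + δX)ᵀ * δB + δA * (X + δX)ᵀ * (B + δB)‖
              ≤ ‖δC + A * (X + δX)ᵀ * δB‖ + ‖δA * (X + δX)ᵀ * (B + δB)‖ := norm_add_le _ _
            _ ≤ ‖δC‖ + ‖A * (X + δX)ᵀ * δB‖ + ‖δA * (X + δX)ᵀ * (B + δB)‖ := by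
                have := norm_add_le δC (A * (X + δX)ᵀ * δB); linarith
            _ ≤ ‖δC‖ + Δ * (‖X‖ + ‖δX‖) := by rw [hΔ]; ring_nf; nlinarith
  have h1 : (0:ℝ) < 1 - k * Δ := by linarith
  rw [le_div_iff₀ h1]
  nlinarith [norm_nonneg δX]
end
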